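/- In the construction of Theorem 3 with k extra variables, let w = (1/3)^{n+j+k+1} where n = |enc(φ')|. Then Z(enc(φ')·0) = w and Z(enc(φ')·1) = w · 2^{k−1} · #(φ). Consequently, p(0 | enc(φ')) = 1 if φ is unsatisfiable, and p(0 | enc(φ')) ≤ 1/(1 + 2^{k−1}) if φ is satisfiable. -/

import Mathlib

/-- Boolean formulas over variables `A_0, A_1, …` (0-indexed), with a truth constant. -/
inductive Fm : Type
  | tru : Fm
  | var : ℕ → Fm
  | not : Fm → Fm
  | and : Fm → Fm → Fm
  | or : Fm → Fm → Fm

/-- Evaluation of a formula under an assignment `σ`. -/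
def Fm.eval (σ : ℕ → Bool) : Fm → Bool
  | .tru => true
  | .var i => σ i
  | .not φ => !(φ.eval σ)
  | .and φ ψ => φ.eval σ && ψ.eval σ
  | .or φ ψ => φ.eval σ || ψ.eval σ

/-- `Shift(φ)`: rename each variable `A_i` to `A_{i+1}`. -/
def Fm.shift : Fm → Fm
  | .tru => .tru
  | .var i => .var (i + 1)
  | .not φ => .not φ.shift
  | .and φ ψ => .and φ.shift ψ.shift
  | .or φ ψ => .or φ.shift ψ.shift

/-- The conjunction `¬A_0 ∧ ⋯ ∧ ¬A_{n-1}`. -/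
def allFalse : ℕ → Fm
  | 0 => .tru
  | n + 1 => .and (allFalse n) (.not (.var n))

/-- `φ` is a formula on the variables `A_0, …, A_{j-1}`: its value depends only on them. -/
def onlyUses (j : ℕ) (φ : Fm) : Prop :=
  ∀ σ σ' : ℕ → Bool, (∀ i < j, σ i = σ' i) → φ.eval σ = φ.eval σ'

/-- An assignment `a ∈ {0,1}^n` satisfies `φ`. -/
def satN {n : ℕ} (a : Fin n → Bool) (φ : Fm) : Prop :=
  φ.eval (fun i => if h : i < n then a ⟨i, h⟩ else false) = true

instance {n : ℕ} (a : Fin n → Bool) (φ : Fm) : Decidable (satN a φ) :=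
  inferInstanceAs (Decidable (_ = true))

open scoped ENNReal

/-- `#(φ)`: the number of satisfying assignments of `φ` in `{0,1}^n`. -/
def countSat (n : ℕ) (φ : Fm) : ℕ :=
  (Finset.univ.filter fun a : Fin n → Bool => satN a φ).card

/-- A binary string `a` (read as an assignment of `A_0, A_1, …`, padded with `false`)
satisfies `φ`. -/
def satL (a : List Bool) (φ : Fm) : Prop :=
  φ.eval (fun i => a.getD i false) = true

/-- `φ' = (¬A_0 ∧ ⋯ ∧ ¬A_{j+k-1}) ∨ (A_0 ∧ Shift(φ))`, on `j + k` variables. -/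
def phiK (j k : ℕ) (φ : Fm) : Fm :=
  .or (allFalse (j + k)) (.and (.var 0) φ.shift)

lemma allFalse_eval (σ : ℕ → Bool) (m : ℕ) :
    (allFalse m).eval σ = true ↔ ∀ i < m, σ i = false := by
  induction m with
  | zero => simp [allFalse, Fm.eval]
  | succ m ih =>
    simp only [allFalse, Fm.eval, Bool.and_eq_true, ih, Bool.not_eq_true']
    constructor
    · rintro ⟨h1, h2⟩ i hi
      rcases Nat.lt_succ_iff_lt_or_eq.mp hi with h | h
      · exact h1 i h
      · subst h; exact h2
    · intro h
      exact ⟨fun i hi => h i (Nat.lt_succ_of_lt hi), h m (Nat.lt_succ_self m)⟩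

lemma shift_eval (φ : Fm) (σ : ℕ → Bool) :
    φ.shift.eval σ = φ.eval (fun i => σ (i + 1)) := by
  induction φ with
  | tru => rfl
  | var i => rfl
  | not φ ih => simp [Fm.shift, Fm.eval, ih]
  | and φ ψ ih1 ih2 => simp [Fm.shift, Fm.eval, ih1, ih2]
  | or φ ψ ih1 ih2 => simp [Fm.shift, Fm.eval, ih1, ih2]

lemma getD_ofFn {m : ℕ} (a : Fin m → Bool) (i : ℕ) :
    (List.ofFn a).getD i false = if h : i < m then a ⟨i, h⟩ else false := by
  by_cases h : i < m
  · rw [List.getD_eq_getElem _ _ (by simpa using h)]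
    simp [h]
  · rw [List.getD_eq_default _ _ (by simpa using h)]
    simp [h]

lemma satL_ofFn {m : ℕ} (a : Fin m → Bool) (ψ : Fm) :
    satL (List.ofFn a) ψ ↔ satN a ψ := by
  unfold satL satN
  have : (fun i => (List.ofFn a).getD i false)
      = fun i => if h : i < m then a ⟨i, h⟩ else false := funext (getD_ofFn a)
  rw [this]

lemma exists_ofFn (b : List Bool) {m : ℕ} (h : b.length = m) :
    ∃ a : Fin m → Bool, List.ofFn a = b := by
  refine ⟨fun i => b.getD i false, ?_⟩
  apply List.ext_getElem (by simp [h])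
  intro i h1 h2
  rw [List.getElem_ofFn]
  rw [List.getD_eq_getElem _ _ h2]

lemma satN_phiK {j k : ℕ} (hk : 1 ≤ k) {φ : Fm} (hφ : onlyUses j φ)
    (a : Fin (j + k) → Bool) :
    satN a (phiK j k φ) ↔
      (∀ i, a i = false) ∨
        (a ⟨0, by omega⟩ = true ∧ satN (fun i : Fin j => a ⟨i + 1, by omega⟩) φ) := by
  unfold satN phiK
  simp only [Fm.eval, Bool.or_eq_true, Bool.and_eq_true]
  have h1 : ((allFalse (j + k)).eval fun i => if h : i < j + k then a ⟨i, h⟩ else false)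
      = true ↔ ∀ i, a i = false := by
    rw [allFalse_eval]
    constructor
    · intro h i
      have := h i i.isLt
      simpa [i.isLt] using this
    · intro h i hi
      simp [hi, h ⟨i, hi⟩]
  have h2 : (if h : 0 < j + k then a ⟨0, h⟩ else false) = a ⟨0, by omega⟩ := by
    rw [dif_pos (by omega)]
  have h3 : (Fm.shift φ).eval (fun i => if h : i < j + k then a ⟨i, h⟩ else false)
      = φ.eval fun i => if h : i < j then a ⟨i + 1, by omega⟩ else false := by
    rw [shift_eval]
    apply hφ
    intro i hi
    have hik : i + 1 < j + k := by omega
    simp [hik, hi]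
  rw [h1, h2, h3]

lemma prefix_single_ofFn {m : ℕ} (hm : 0 < m) (a : Fin m → Bool) (c : Bool) :
    [c] <+: List.ofFn a ↔ a ⟨0, hm⟩ = c := by
  rw [List.prefix_iff_getElem]
  simp only [List.length_singleton, List.length_ofFn]
  constructor
  · rintro ⟨h, hh⟩
    have := hh 0 (by omega)
    simpa using this.symm
  · intro h
    refine ⟨by omega, ?_⟩
    intro x hx
    interval_cases x
    simpa using h.symm

lemma card_true_aux (j k : ℕ) (hk : 1 ≤ k) (φ : Fm) :
    (Finset.univ.filter fun a : Fin (j + k) → Bool =>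
       a ⟨0, by omega⟩ = true ∧ satN (fun i : Fin j => a ⟨i + 1, by omega⟩) φ).card
      = countSat j φ * 2 ^ (k - 1) := by
  rw [countSat]
  have h2 : (2 : ℕ) ^ (k - 1)
      = (Finset.univ : Finset (Fin (k - 1) → Bool)).card := by
    simp [Finset.card_univ]
  rw [h2, ← Finset.card_product]
  apply Finset.card_nbij'
    (i := fun a => (fun i : Fin j => a ⟨i + 1, by omega⟩,
                    fun i : Fin (k - 1) => a ⟨j + 1 + i, by omega⟩))
    (j := fun p => fun i : Fin (j + k) =>
      if h0 : (i : ℕ) = 0 then true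
      else if h : (i : ℕ) < j + 1 then p.1 ⟨(i : ℕ) - 1, by omega⟩
      else p.2 ⟨(i : ℕ) - 1 - j, by omega⟩)
  · intro a ha
    simp only [Finset.mem_coe, Finset.mem_filter, Finset.mem_univ, true_and] at ha
    simp only [Finset.mem_coe, Finset.mem_product, Finset.mem_filter, Finset.mem_univ, true_and]
    exact ⟨ha.2, trivial⟩
  · intro p hp
    simp only [Finset.mem_coe, Finset.mem_product, Finset.mem_filter, Finset.mem_univ, true_and,
      and_true] at hp
    simp only [Finset.mem_coe, Finset.mem_filter, Finset.mem_univ, true_and]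
    constructor
    · simp
    · have he : (fun i : Fin j =>
          (fun i : Fin (j + k) =>
            if h0 : (i : ℕ) = 0 then true
            else if h : (i : ℕ) < j + 1 then p.1 ⟨(i : ℕ) - 1, by omega⟩
            else p.2 ⟨(i : ℕ) - 1 - j, by omega⟩) ⟨(i : ℕ) + 1, by omega⟩)
          = p.1 := by
        funext i
        have h0 : ¬((i : ℕ) + 1 = 0) := by omega
        have h1 : (i : ℕ) + 1 < j + 1 := by omega
        simp only [h0, h1, dif_neg, dif_pos, not_false_iff]
        exact congrArg p.1 (Fin.ext (by simp only [Fin.val_mk]; omega))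
      rw [he]
      exact hp
  · intro a ha
    simp only [Finset.mem_coe, Finset.mem_filter, Finset.mem_univ, true_and] at ha
    funext i
    by_cases h0 : (i : ℕ) = 0
    · simp only [h0, dif_pos]
      have hi0 : i = ⟨0, by omega⟩ := Fin.ext (by simp only [Fin.val_mk]; omega)
      rw [hi0]
      exact ha.1.symm
    · by_cases h1 : (i : ℕ) < j + 1
      · simp only [h0, h1, dif_neg, dif_pos, not_false_iff]
        exact congrArg a (Fin.ext (by simp only [Fin.val_mk]; omega))
      · simp only [h0, h1, dif_neg, not_false_iff]
        exact congrArg a (Fin.ext (by simp only [Fin.val_mk]; omega))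
  · intro p hp
    have e1 : (fun i : Fin j =>
        (fun i : Fin (j + k) =>
          if h0 : (i : ℕ) = 0 then true
          else if h : (i : ℕ) < j + 1 then p.1 ⟨(i : ℕ) - 1, by omega⟩
          else p.2 ⟨(i : ℕ) - 1 - j, by omega⟩) ⟨(i : ℕ) + 1, by omega⟩)
        = p.1 := by
      funext i
      have h0 : ¬((i : ℕ) + 1 = 0) := by omega
      have h1 : (i : ℕ) + 1 < j + 1 := by omega
      simp only [h0, h1, dif_neg, dif_pos, not_false_iff]
      exact congrArg p.1 (Fin.ext (by simp only [Fin.val_mk]; omega))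
    have e2 : (fun i : Fin (k - 1) =>
        (fun i : Fin (j + k) =>
          if h0 : (i : ℕ) = 0 then true
          else if h : (i : ℕ) < j + 1 then p.1 ⟨(i : ℕ) - 1, by omega⟩
          else p.2 ⟨(i : ℕ) - 1 - j, by omega⟩) ⟨j + 1 + (i : ℕ), by omega⟩)
        = p.2 := by
      funext i
      have h0 : ¬(j + 1 + (i : ℕ) = 0) := by omega
      have h1 : ¬(j + 1 + (i : ℕ) < j + 1) := by omega
      simp only [h0, h1, dif_neg, not_false_iff]
      exact congrArg p.2 (Fin.ext (by simp only [Fin.val_mk]; omega))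
    exact Prod.ext e1 e2

/-- In the construction with `k` extra variables, with
`n = |enc(φ')|` and `w = (1/3)^{n+j+k+1}`: `Z(enc(φ')·0) = w` and
`Z(enc(φ')·1) = w · 2^{k-1} · #(φ)`.  Consequently `p(0 | enc(φ')) = 1` if `φ` is
unsatisfiable, and `p(0 | enc(φ')) ≤ 1/(1 + 2^{k-1})` if `φ` is satisfiable. -/
theorem stmt8 (enc : Fm → List Bool)
    (hpf : ∀ φ ψ : Fm, enc φ <+: enc ψ → φ = ψ)
    (nv : Fm → ℕ) (hnv : ∀ ψ, onlyUses (nv ψ) ψ)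
    (pt : List Bool → ℝ≥0∞)
    (hpt1 : ∀ (ψ : Fm) (a : List Bool), a.length = nv ψ → satL a ψ →
      pt (enc ψ ++ a) = (1 / 3 : ℝ≥0∞) ^ ((enc ψ ++ a).length + 1))
    (hpt0 : ∀ x : List Bool,
      (¬ ∃ (ψ : Fm) (a : List Bool), x = enc ψ ++ a ∧ a.length = nv ψ ∧ satL a ψ) →
      pt x = 0)
    (φ : Fm) (j k : ℕ) (hk : 1 ≤ k) (hj : nv φ = j)
    (hj' : nv (phiK j k φ) = j + k)
    (Z : List Bool → ℝ≥0∞)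
    (hZ : ∀ y : List Bool, Z y = ∑' x : {x : List Bool // y <+: x}, pt x.1)
    (n : ℕ) (hn : n = (enc (phiK j k φ)).length)
    (w : ℝ≥0∞) (hw : w = (1 / 3 : ℝ≥0∞) ^ (n + j + k + 1)) :
    Z (enc (phiK j k φ) ++ [false]) = w ∧
    Z (enc (phiK j k φ) ++ [true]) = w * 2 ^ (k - 1) * (countSat j φ : ℝ≥0∞) ∧
    (countSat j φ = 0 →
      Z (enc (phiK j k φ) ++ [false]) / Z (enc (phiK j k φ)) = 1) ∧
    (1 ≤ countSat j φ →
      Z (enc (phiK j k φ) ++ [false]) / Z (enc (phiK j k φ))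
        ≤ 1 / (1 + (2 : ℝ≥0∞) ^ (k - 1))) := by
  set φ' := phiK j k φ with hφ'
  set E := enc φ' with hE
  have hφonly : onlyUses j φ := hj ▸ hnv φ
  -- support characterization
  have hEne : ∀ y x : List Bool, E <+: y → y <+: x → pt x ≠ 0 →
      ∃ a : Fin (j + k) → Bool, satN a φ' ∧ x = E ++ List.ofFn a := by
    intro y x hEy hyx hne
    by_contra hcon
    apply hne
    apply hpt0
    rintro ⟨ψ, b, hxb, hlen, hsat⟩
    have hEx : E <+: x := hEy.trans hyx
    have hψx : enc ψ <+: x := hxb ▸ (⟨b, rfl⟩ : enc ψ <+: enc ψ ++ b)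
    have hψE : ψ = φ' := by
      rcases List.prefix_or_prefix_of_prefix hEx hψx with h | h
      · exact (hpf φ' ψ h).symm
      · exact hpf ψ φ' h
    subst hψE
    rw [hj'] at hlen
    obtain ⟨a, ha⟩ := exists_ofFn b hlen
    exact hcon ⟨a, by rw [← ha] at hsat; exact (satL_ofFn a φ').mp hsat,
      by rw [hxb, ← ha]⟩
  -- value on the support
  have hval : ∀ a : Fin (j + k) → Bool, satN a φ' →
      pt (E ++ List.ofFn a) = w := by
    intro a ha
    rw [hpt1 φ' (List.ofFn a) (by simp [hj']) ((satL_ofFn a φ').mpr ha)]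
    rw [hw]
    congr 1
    simp only [List.length_append, List.length_ofFn, ← hE]
    omega
  -- Z as a finite sum
  have hZcard : ∀ y : List Bool, E <+: y →
      Z y = ((Finset.univ.filter fun a : Fin (j + k) → Bool =>
          satN a φ' ∧ y <+: E ++ List.ofFn a).card : ℝ≥0∞) * w := by
    intro y hy
    rw [hZ]
    have hsub : (∑' x : {x : List Bool // y <+: x}, pt x.1)
        = ∑' x : List Bool, Set.indicator {x | y <+: x} pt x :=
      tsum_subtype _ _
    rw [hsub]
    rw [tsum_eq_sum (s :=
      (Finset.univ.filter fun a : Fin (j + k) → Bool =>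
          satN a φ' ∧ y <+: E ++ List.ofFn a).image fun a => E ++ List.ofFn a)]
    · rw [Finset.sum_image]
      · rw [Finset.sum_congr rfl (g := fun _ => w) ?_]
        · rw [Finset.sum_const, nsmul_eq_mul]
        · intro a ha
          simp only [Finset.mem_filter, Finset.mem_univ, true_and] at ha
          exact (Set.indicator_of_mem (s := {x | y <+: x}) ha.2 pt).trans (hval a ha.1)
      · intro a1 _ a2 _ h
        exact List.ofFn_injective (List.append_cancel_left h)
    · intro x hx
      by_cases hyx : y <+: x
      · rw [show {x | y <+: x}.indicator pt x = pt x from Set.indicator_of_mem (s := {x | y <+: x}) hyx pt]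
        by_contra hne
        apply hx
        obtain ⟨a, ha, hxa⟩ := hEne y x hy hyx hne
        rw [Finset.mem_image]
        exact ⟨a, Finset.mem_filter.mpr ⟨Finset.mem_univ a, ha, hxa ▸ hyx⟩, hxa.symm⟩
      · exact Set.indicator_of_notMem (s := {x | y <+: x}) hyx pt
  have hjk : 0 < j + k := by omega
  -- prefix conditions
  have hpre : ∀ (c : Bool) (a : Fin (j + k) → Bool),
      (E ++ [c] <+: E ++ List.ofFn a) ↔ a ⟨0, hjk⟩ = c := by
    intro c a
    rw [List.prefix_append_right_inj, prefix_single_ofFn hjk]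
  -- the three cardinalities
  have cardF : (Finset.univ.filter fun a : Fin (j + k) → Bool =>
      satN a φ' ∧ E ++ [false] <+: E ++ List.ofFn a).card = 1 := by
    have h : (Finset.univ.filter fun a : Fin (j + k) → Bool =>
        satN a φ' ∧ E ++ [false] <+: E ++ List.ofFn a)
        = {fun _ => false} := by
      apply Finset.ext
      intro a
      simp only [Finset.mem_filter, Finset.mem_univ, true_and, Finset.mem_singleton,
        hpre false a]
      rw [hφ', satN_phiK hk hφonly]
      constructor
      · rintro ⟨h1 | ⟨h1, _⟩, h2⟩
        · funext i; exact h1 i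
        · rw [h1] at h2; exact absurd h2 (by simp)
      · rintro rfl
        exact ⟨Or.inl fun i => rfl, rfl⟩
    rw [h, Finset.card_singleton]
  have cardT : (Finset.univ.filter fun a : Fin (j + k) → Bool =>
      satN a φ' ∧ E ++ [true] <+: E ++ List.ofFn a).card
      = countSat j φ * 2 ^ (k - 1) := by
    rw [← card_true_aux j k hk φ]
    congr 1
    apply Finset.ext
    intro a
    simp only [Finset.mem_filter, Finset.mem_univ, true_and, hpre true a]
    rw [hφ', satN_phiK hk hφonly]
    constructor
    · rintro ⟨h1 | ⟨h1, h2⟩, h3⟩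
      · rw [h1 ⟨0, hjk⟩] at h3; exact absurd h3 (by simp)
      · exact ⟨h3, h2⟩
    · rintro ⟨h1, h2⟩
      exact ⟨Or.inr ⟨h1, h2⟩, h1⟩
  have cardE : (Finset.univ.filter fun a : Fin (j + k) → Bool =>
      satN a φ' ∧ E <+: E ++ List.ofFn a).card
      = 1 + countSat j φ * 2 ^ (k - 1) := by
    have hsimp : (Finset.univ.filter fun a : Fin (j + k) → Bool =>
        satN a φ' ∧ E <+: E ++ List.ofFn a)
        = Finset.univ.filter fun a : Fin (j + k) → Bool => satN a φ' := by
      apply Finset.filter_congr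
      intro a _
      simp [List.prefix_append]
    rw [hsimp]
    rw [← cardT, ← cardF]
    have key := Finset.card_filter_add_card_filter_not
      (s := Finset.univ.filter fun a : Fin (j + k) → Bool => satN a φ')
      (p := fun a => a ⟨0, hjk⟩ = false)
    rw [Finset.filter_filter, Finset.filter_filter] at key
    have e1 : (Finset.univ.filter fun a : Fin (j + k) → Bool =>
        satN a φ' ∧ a ⟨0, hjk⟩ = false)
        = Finset.univ.filter fun a : Fin (j + k) → Bool =>
          satN a φ' ∧ E ++ [false] <+: E ++ List.ofFn a := by
      apply Finset.filter_congr; intro a _; rw [hpre false a]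
    have e2 : (Finset.univ.filter fun a : Fin (j + k) → Bool =>
        satN a φ' ∧ ¬(a ⟨0, hjk⟩ = false))
        = Finset.univ.filter fun a : Fin (j + k) → Bool =>
          satN a φ' ∧ E ++ [true] <+: E ++ List.ofFn a := by
      apply Finset.filter_congr; intro a _; rw [hpre true a]; simp
    rw [e1, e2] at key
    omega
  -- the three Z values
  have hprefF : E <+: E ++ [false] := ⟨[false], rfl⟩
  have hprefT : E <+: E ++ [true] := ⟨[true], rfl⟩
  have ZF : Z (E ++ [false]) = w := by
    rw [hZcard _ hprefF, cardF]; simp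
  have ZT : Z (E ++ [true]) = w * 2 ^ (k - 1) * (countSat j φ : ℝ≥0∞) := by
    rw [hZcard _ hprefT, cardT]
    push_cast
    ring
  have ZE : Z E = (1 + (countSat j φ : ℝ≥0∞) * 2 ^ (k - 1)) * w := by
    rw [hZcard E (List.prefix_refl E), cardE]
    push_cast
    ring
  have hw0 : w ≠ 0 := by
    rw [hw]
    apply pow_ne_zero
    simp
  have hwt : w ≠ ⊤ := by
    rw [hw]
    apply ENNReal.pow_ne_top
    simp [ENNReal.div_eq_top]
  refine ⟨ZF, ZT, ?_, ?_⟩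
  · intro h0
    rw [ZF, ZE, h0]
    simp only [Nat.cast_zero, zero_mul, add_zero, one_mul]
    exact ENNReal.div_self hw0 hwt
  · intro h1
    rw [ZF, ZE]
    have hrw : w / ((1 + (countSat j φ : ℝ≥0∞) * 2 ^ (k - 1)) * w)
        = 1 / (1 + (countSat j φ : ℝ≥0∞) * 2 ^ (k - 1)) := by
      rw [mul_comm]
      calc w / (w * (1 + (countSat j φ : ℝ≥0∞) * 2 ^ (k - 1)))
          = w * 1 / (w * (1 + (countSat j φ : ℝ≥0∞) * 2 ^ (k - 1))) := by rw [mul_one]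
        _ = 1 / (1 + (countSat j φ : ℝ≥0∞) * 2 ^ (k - 1)) :=
            ENNReal.mul_div_mul_left _ _ hw0 hwt
    rw [hrw]
    apply ENNReal.div_le_div_left
    apply add_le_add_right
    calc (2 : ℝ≥0∞) ^ (k - 1) = 1 * 2 ^ (k - 1) := (one_mul _).symm
      _ ≤ (countSat j φ : ℝ≥0∞) * 2 ^ (k - 1) := by
          apply mul_le_mul_left
          exact_mod_cast h1
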